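/- arXiv:1508.05062 — 2 statements merged into one kernel-verified Lean document; each statement's English description precedes it below -/
import Mathlib

section
/- Let N be a nonnegative integer with Zeckendorf digits (ε_i)_{i≥0} in the Fibonacci base (so N = Σ_i ε_i F_i, ε_i ∈ {0,1}, ε_{i+1}ε_i ≠ 11, finitely many nonzero). Define a carry sequence and new digits as follows. If ε_0 = 0: set c_{-1} = 1 and for every i ≥ 0 put ε'_{2i} = ⌊(ε_{2i} + c_{i-1})/(ε_{2i+1} c_{i-1} + 1)⌋, ε'_{2i+1} = ⌊ε_{2i+1}/(c_{i-1} + 1)⌋, c_i = c_{i-1} ε_{2i+1}. If ε_0 = 1: set ε'_0 = 0, c_0 = 1 and for every i ≥ 1 put ε'_{2i-1} = ⌊(ε_{2i-1} + c_{i-1})/(ε_{2i} c_{i-1} + 1)⌋, ε'_{2i} = ⌊ε_{2i}/(c_{i-1} + 1)⌋, c_i = c_{i-1} ε_{2i}. Then the resulting sequence (ε'_i)_{i≥0} has ε'_i ∈ {0,1}, ε'_{i+1}ε'_i ≠ 11, finitely many nonzero terms, and Σ_i ε'_i F_i = N + 1; i.e., the algorithm computes the Zeckendorf digits of N+1 in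 the Fibonacci base. -/
/-- Fibonacci sequence with `F 0 = 1`, `F 1 = 2`, `F (n+2) = F (n+1) + F n`. -/
def fibF : ℕ → ℕ
  | 0 => 1
  | 1 => 2
  | (n+2) => fibF (n+1) + fibF n

lemma fibF_pos : ∀ n, 0 < fibF n
  | 0 => by simp [fibF]
  | 1 => by simp [fibF]
  | (n+2) => by
      have h1 := fibF_pos (n+1)
      simp only [fibF]
      omega

lemma fibF_step (n : ℕ) : fibF (n+2) = fibF (n+1) + fibF n := rfl

/-- If the digits below `2m` alternate `0,1,0,1,…`, their value is `F(2m) - 1`. -/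
lemma sum1 (ε : ℕ → ℕ) (m : ℕ) (h : ∀ i, i < m → ε (2*i) = 0 ∧ ε (2*i+1) = 1) :
    (∑ j ∈ Finset.range (2*m), ε j * fibF j) + 1 = fibF (2*m) := by
  induction m with
  | zero => simp [fibF]
  | succ n ih =>
    have ih' := ih (fun i hi => h i (by omega))
    have e1 := (h n (by omega)).1
    have e2 := (h n (by omega)).2
    have h2 : 2*(n+1) = (2*n)+1+1 := by ring
    rw [h2, Finset.sum_range_succ, Finset.sum_range_succ, e1, e2]
    have hf : fibF (2*n+1+1) = fibF (2*n+1) + fibF (2*n) := rfl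
    rw [hf]
    omega

/-- If the digits below `2m` alternate `1,0,1,0,…`, their value is `F(2m+1) - F(2m) - 1`. -/
lemma sum2 (ε : ℕ → ℕ) (m : ℕ) (h : ∀ i, i < m → ε (2*i) = 1 ∧ ε (2*i+1) = 0) :
    (∑ j ∈ Finset.range (2*m), ε j * fibF j) + 1 + fibF (2*m) = fibF (2*m+1) := by
  induction m with
  | zero => simp [fibF]
  | succ n ih =>
    have ih' := ih (fun i hi => h i (by omega))
    have e1 := (h n (by omega)).1
    have e2 := (h n (by omega)).2
    have h2 : 2*(n+1) = (2*n)+1+1 := by ring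
    rw [h2, Finset.sum_range_succ, Finset.sum_range_succ, e1, e2]
    have hf1 : fibF (2*n+1+1) = fibF (2*n+1) + fibF (2*n) := rfl
    have hf2 : fibF (2*n+1+1+1) = fibF (2*n+1+1) + fibF (2*n+1) := rfl
    rw [hf1, hf2]
    omega

/-- Let `N` be a nonnegative integer with Zeckendorf digits `ε` in th
Fibonacci base.  The carry algorithm (case `ε 0 = 0` resp. `ε 0 = 1`, with carries `c`,
where `c i` denotes the carry `c_{i-1}(N+1)` resp. `c_i(N+1)`) produces the Zeckendorf
digits `ε'` of `N + 1`:  `ε' i ∈ {0,1}`, no two consecutive ones, finitely many nonzero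
terms, and `∑ i, ε' i * F i = N + 1`. -/
theorem stmt0 (N : ℕ) (ε ε' c : ℕ → ℕ)
    (hε01 : ∀ i, ε i ≤ 1)
    (hno11 : ∀ i, ¬(ε (i+1) = 1 ∧ ε i = 1))
    (hrep : ∃ k, (∀ i, k ≤ i → ε i = 0) ∧ N = ∑ i ∈ Finset.range k, ε i * fibF i)
    (halg :
      (ε 0 = 0 ∧ c 0 = 1 ∧
        ∀ i : ℕ,
          ε' (2*i) = (ε (2*i) + c i) / (ε (2*i+1) * c i + 1) ∧
          ε' (2*i+1) = ε (2*i+1) / (c i + 1) ∧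
          c (i+1) = c i * ε (2*i+1))
      ∨
      (ε 0 = 1 ∧ ε' 0 = 0 ∧ c 0 = 1 ∧
        ∀ i : ℕ, 1 ≤ i →
          ε' (2*i-1) = (ε (2*i-1) + c (i-1)) / (ε (2*i) * c (i-1) + 1) ∧
          ε' (2*i) = ε (2*i) / (c (i-1) + 1) ∧
          c i = c (i-1) * ε (2*i))) :
    (∀ i, ε' i ≤ 1) ∧ (∀ i, ¬(ε' (i+1) = 1 ∧ ε' i = 1)) ∧
    ∃ k, (∀ i, k ≤ i → ε' i = 0) ∧ N + 1 = ∑ i ∈ Finset.range k, ε' i * fibF i := by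
  obtain ⟨k, hk0, hkN⟩ := hrep
  rcases halg with ⟨he0, hc0, halg⟩ | ⟨he0, he'0, hc0, halg⟩
  · -- case ε 0 = 0
    have hex : ∃ i, ε (2*i+1) = 0 := ⟨k, hk0 _ (by omega)⟩
    obtain ⟨m, hm, hlt⟩ : ∃ m, ε (2*m+1) = 0 ∧ ∀ i, i < m → ε (2*i+1) = 1 := by
      refine ⟨Nat.find hex, Nat.find_spec hex, fun i hi => ?_⟩
      have h1 := Nat.find_min hex hi
      have h2 := hε01 (2*i+1)
      omega
    have heven : ∀ i, i ≤ m → ε (2*i) = 0 := by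
      intro i hi
      rcases Nat.eq_zero_or_pos i with rfl | hpos
      · simpa using he0
      · have h1 : ε (2*(i-1)+1) = 1 := hlt (i-1) (by omega)
        have hn := hno11 (2*(i-1)+1)
        rw [show 2*(i-1)+1+1 = 2*i from by omega] at hn
        have h2 := hε01 (2*i)
        omega
    have hc1 : ∀ i, i ≤ m → c i = 1 := by
      intro i hi
      induction i with
      | zero => exact hc0
      | succ n ih =>
        have h3 := (halg n).2.2
        rw [ih (by omega), hlt n (by omega)] at h3
        simpa using h3
    have hcz : ∀ i, m < i → c i = 0 := by
      intro i hi
      induction i with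
      | zero => omega
      | succ n ih =>
        have h3 := (halg n).2.2
        rcases Nat.lt_or_ge n m with h | h
        · -- then n = m is impossible unless m ≤ n; here m < n+1 and n < m: contradiction unless n = m
          omega
        · rcases Nat.eq_or_lt_of_le h with h' | h'
          · subst h'
            rw [hm] at h3
            simpa using h3
          · rw [ih h'] at h3
            simpa using h3
    have hE0 : ∀ j, j < 2*m → ε' j = 0 := by
      intro j hj
      rcases Nat.even_or_odd j with ⟨i, rfl⟩ | ⟨i, rfl⟩
      · have h1 := (halg i).1
        rw [show i+i = 2*i from by ring] at *
        rw [heven i (by omega), hlt i (by omega), hc1 i (by omega)] at h1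
        simpa using h1
      · have h1 := (halg i).2.1
        rw [show 2*i+1 = 2*i+1 from rfl] at h1
        rw [hlt i (by omega), hc1 i (by omega)] at h1
        simpa using h1
    have hEm : ε' (2*m) = 1 := by
      have h1 := (halg m).1
      rw [heven m le_rfl, hm, hc1 m le_rfl] at h1
      simpa using h1
    have hEm1 : ε' (2*m+1) = 0 := by
      have h1 := (halg m).2.1
      rw [hm, hc1 m le_rfl] at h1
      simpa using h1
    have hEtail : ∀ j, 2*m+2 ≤ j → ε' j = ε j := by
      intro j hj
      rcases Nat.even_or_odd j with ⟨i, rfl⟩ | ⟨i, rfl⟩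
      · have h1 := (halg i).1
        rw [show i+i = 2*i from by ring] at *
        rw [hcz i (by omega)] at h1
        simpa using h1
      · have h1 := (halg i).2.1
        rw [hcz i (by omega)] at h1
        simpa using h1
    have hb : ∀ i, ε' i ≤ 1 := by
      intro j
      rcases Nat.lt_or_ge j (2*m) with h | h
      · rw [hE0 j h]; omega
      by_cases h' : j = 2*m
      · rw [h']; omega
      by_cases h'' : j = 2*m+1
      · rw [h'', hEm1]; omega
      · rw [hEtail j (by omega)]; exact hε01 j
    refine ⟨hb, ?_, 2*m+2+k, ?_, ?_⟩
    · rintro j ⟨h1, h2⟩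
      rcases Nat.lt_or_ge j (2*m) with h | h
      · rw [hE0 j h] at h2; omega
      by_cases h' : j = 2*m
      · rw [h', hEm1] at h1; omega
      by_cases h'' : j = 2*m+1
      · rw [h'', hEm1] at h2; omega
      · rw [hEtail j (by omega), hEtail (j+1) (by omega)] at *
        exact hno11 j ⟨h1, h2⟩
    · intro j hj
      rw [hEtail j (by omega)]
      exact hk0 j (by omega)
    · have hsplit := Finset.sum_range_add (fun j => ε' j * fibF j) (2*m+2) k
      have hsplit' := Finset.sum_range_add (fun j => ε j * fibF j) (2*m+2) k
      have htail : ∑ j ∈ Finset.range k, ε' (2*m+2+j) * fibF (2*m+2+j)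
          = ∑ j ∈ Finset.range k, ε (2*m+2+j) * fibF (2*m+2+j) := by
        refine Finset.sum_congr rfl fun j _ => ?_
        rw [hEtail _ (by omega)]
      have hN : N = ∑ j ∈ Finset.range (2*m+2+k), ε j * fibF j := by
        rw [hkN]
        exact Finset.sum_subset (Finset.range_subset_range.mpr (by omega))
          (fun j _ hj' => by
            rw [hk0 j (by simpa using hj')]; ring)
      have hheadε' : ∑ j ∈ Finset.range (2*m+2), ε' j * fibF j = fibF (2*m) := by
        rw [show 2*m+2 = (2*m)+1+1 from rfl, Finset.sum_range_succ, Finset.sum_range_succ,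
          hEm, hEm1, Finset.sum_eq_zero (fun j hj => by
            rw [hE0 j (by simpa using hj)]; ring)]
        simp
      have hheadε : (∑ j ∈ Finset.range (2*m+2), ε j * fibF j) + 1 = fibF (2*m) := by
        rw [show 2*m+2 = (2*m)+1+1 from rfl, Finset.sum_range_succ, Finset.sum_range_succ,
          heven m le_rfl, hm]
        simpa using sum1 ε m (fun i hi => ⟨heven i (by omega), hlt i hi⟩)
      rw [hN]
      omega
  · -- case ε 0 = 1
    have hex : ∃ i, ε (2*(i+1)) = 0 := ⟨k, hk0 _ (by omega)⟩
    obtain ⟨m', hm'⟩ : ∃ m', ε (2*(m'+1)) = 0 ∧ ∀ j, j < m' → ε (2*(j+1)) = 1 := by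
      refine ⟨Nat.find hex, Nat.find_spec hex, fun j hj => ?_⟩
      have h1 := Nat.find_min hex hj
      have h2 := hε01 (2*(j+1))
      omega
    obtain ⟨hm, hlt'⟩ := hm'
    set m := m' + 1 with hmdef
    -- for 1 ≤ i < m, ε (2i) = 1; ε (2m) = 0
    have heven1 : ∀ i, i < m → ε (2*i) = 1 := by
      intro i hi
      rcases Nat.eq_zero_or_pos i with rfl | hpos
      · simpa using he0
      · have := hlt' (i-1) (by omega)
        rw [show 2*(i-1+1) = 2*i from by omega] at this
        exact this
    have hmz : ε (2*m) = 0 := hm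
    have hodd : ∀ i, i < m → ε (2*i+1) = 0 := by
      intro i hi
      have h1 := heven1 i hi
      have hn := hno11 (2*i)
      have h2 := hε01 (2*i+1)
      omega
    have hc1 : ∀ i, i < m → c i = 1 := by
      intro i hi
      induction i with
      | zero => exact hc0
      | succ n ih =>
        have h3 := (halg (n+1) (by omega)).2.2
        rw [show n+1-1 = n from rfl] at h3
        rw [ih (by omega), heven1 (n+1) (by omega)] at h3
        simpa using h3
    have hcz : ∀ i, m ≤ i → c i = 0 := by
      intro i hi
      induction i with
      | zero => omega
      | succ n ih =>
        have h3 := (halg (n+1) (by omega)).2.2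
        rw [show n+1-1 = n from rfl] at h3
        rcases Nat.lt_or_ge n m with h | h
        · have : n + 1 = m := by omega
          rw [this] at h3 ⊢
          rw [show 2*m = 2*m from rfl, hmz] at h3
          simpa using h3
        · rw [ih (by omega)] at h3
          simpa using h3
    -- values of ε'
    have halg' : ∀ l : ℕ,
        ε' (2*l+1) = (ε (2*l+1) + c l) / (ε (2*l+2) * c l + 1) ∧
        ε' (2*l+2) = ε (2*l+2) / (c l + 1) := by
      intro l
      have h := halg (l+1) (by omega)
      rw [show 2*(l+1)-1 = 2*l+1 from by omega, show 2*(l+1) = 2*l+2 from by ring,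
        show l+1-1 = l from rfl] at h
      exact ⟨h.1, h.2.1⟩
    have hE0 : ∀ j, j < 2*m-1 → ε' j = 0 := by
      intro j hj
      rcases Nat.even_or_odd j with ⟨i, rfl⟩ | ⟨i, rfl⟩
      · rcases Nat.eq_zero_or_pos i with rfl | hpos
        · simpa using he'0
        · have h1 := (halg' (i-1)).2
          rw [show 2*(i-1)+2 = 2*i from by omega, heven1 i (by omega),
            hc1 (i-1) (by omega)] at h1
          rw [show i+i = 2*i from by ring]
          simpa using h1
      · have h1 := (halg' i).1
        rw [show 2*i+2 = 2*(i+1) from by ring] at h1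
        rw [hodd i (by omega), heven1 (i+1) (by omega), hc1 i (by omega)] at h1
        simpa using h1
    have hEm : ε' (2*m-1) = 1 := by
      have h1 := (halg' m').1
      rw [show 2*m'+1 = 2*m-1 from by omega, show 2*m'+2 = 2*m from by omega] at h1
      rw [show ε (2*m-1) = 0 from ?_, hmz, hc1 m' (by omega)] at h1
      · simpa using h1
      · rw [show 2*m-1 = 2*m'+1 from by omega]
        exact hodd m' (by omega)
    have hEm0 : ε' (2*m) = 0 := by
      have h1 := (halg' m').2
      rw [show 2*m'+2 = 2*m from by omega] at h1
      rw [hmz, hc1 m' (by omega)] at h1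
      simpa using h1
    have hEtail : ∀ j, 2*m+1 ≤ j → ε' j = ε j := by
      intro j hj
      rcases Nat.even_or_odd j with ⟨i, rfl⟩ | ⟨i, rfl⟩
      · have h1 := (halg' (i-1)).2
        rw [show 2*(i-1)+2 = i+i from by omega, hcz (i-1) (by omega)] at h1
        rw [show i+i = 2*i from by ring] at *
        simpa using h1
      · have h1 := (halg' i).1
        rw [hcz i (by omega)] at h1
        simpa using h1
    have hb : ∀ i, ε' i ≤ 1 := by
      intro j
      rcases Nat.lt_or_ge j (2*m-1) with h | h
      · rw [hE0 j h]; omega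
      by_cases h' : j = 2*m-1
      · rw [h']; omega
      by_cases h'' : j = 2*m
      · rw [h'', hEm0]; omega
      · rw [hEtail j (by omega)]; exact hε01 j
    refine ⟨hb, ?_, 2*m+1+k, ?_, ?_⟩
    · rintro j ⟨h1, h2⟩
      rcases Nat.lt_or_ge j (2*m-1) with h | h
      · rw [hE0 j h] at h2; omega
      by_cases h' : j = 2*m-1
      · rw [show j+1 = 2*m from by omega, hEm0] at h1; omega
      by_cases h'' : j = 2*m
      · rw [h'', hEm0] at h2; omega
      · rw [hEtail j (by omega), hEtail (j+1) (by omega)] at *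
        exact hno11 j ⟨h1, h2⟩
    · intro j hj
      rw [hEtail j (by omega)]
      exact hk0 j (by omega)
    · have hsplit := Finset.sum_range_add (fun j => ε' j * fibF j) (2*m+1) k
      have hsplit' := Finset.sum_range_add (fun j => ε j * fibF j) (2*m+1) k
      have htail : ∑ j ∈ Finset.range k, ε' (2*m+1+j) * fibF (2*m+1+j)
          = ∑ j ∈ Finset.range k, ε (2*m+1+j) * fibF (2*m+1+j) := by
        refine Finset.sum_congr rfl fun j _ => ?_
        rw [hEtail _ (by omega)]
      have hN : N = ∑ j ∈ Finset.range (2*m+1+k), ε j * fibF j := by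
        rw [hkN]
        exact Finset.sum_subset (Finset.range_subset_range.mpr (by omega))
          (fun j _ hj' => by
            rw [hk0 j (by simpa using hj')]; ring)
      have hheadε' : (∑ j ∈ Finset.range (2*m+1), ε' j * fibF j) + fibF (2*m) = fibF (2*m+1) := by
        rw [show 2*m+1 = (2*m-1)+1+1 from by omega, Finset.sum_range_succ, Finset.sum_range_succ,
          show 2*m-1+1 = 2*m from by omega, hEm, hEm0,
          Finset.sum_eq_zero (fun j hj => by
            rw [hE0 j (by simpa using hj)]; ring)]
        have : fibF (2*m-1) + fibF (2*m) = fibF (2*m+1) := by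
          have hstep := fibF_step (2*m'+1)
          rw [show 2*m-1 = 2*m'+1 from by omega, show 2*m = 2*m'+1+1 from by omega]
          rw [show 2*m'+1+2 = 2*m'+1+1+1 from by omega] at hstep
          omega
        omega
      have hheadε : (∑ j ∈ Finset.range (2*m+1), ε j * fibF j) + 1 + fibF (2*m) = fibF (2*m+1) := by
        rw [show 2*m+1 = (2*m)+1 from rfl, Finset.sum_range_succ, hmz]
        have := sum2 ε m (fun i hi => ⟨heven1 i hi, hodd i hi⟩)
        omega
      rw [hN]
      omega
end

section
/- Let i, j, n be positive integers with F_n ≤ i, j ≤ F_{n+1} − 1. Then the transition probability from i to j equals the transition probability from i − F_n to j − F_n, i.e. S_{i,j} = S_{i−F_n, j−F_n}. -/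
/-- Zeckendorf digits of `N` in the base `fibF`: `N = ∑ i, zeck N i * fibF i`,
with `zeck N i ∈ {0,1}` and no two consecutive `1`'s. -/
def zeck (N i : ℕ) : ℕ :=
  if h : N = 0 then 0
  else if i = Nat.findGreatest (fun j => fibF j ≤ N) N then 1
  else zeck (N - fibF (Nat.findGreatest (fun j => fibF j ≤ N) N)) i
termination_by N
decreasing_by
  exact Nat.sub_lt (Nat.pos_of_ne_zero h) (fibF_pos _)

lemma zeck_eq_zero_of_lt : ∀ N, ∀ i, N < i → zeck N i = 0 := by
  intro N
  induction N using Nat.strong_induction_on with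
  | _ N ih =>
    intro i hi
    rw [zeck]
    split
    · rfl
    · rename_i h
      have hkN : Nat.findGreatest (fun j => fibF j ≤ N) N ≤ N := Nat.findGreatest_le N
      rw [if_neg (by omega)]
      exact ih _ (Nat.sub_lt (Nat.pos_of_ne_zero h) (fibF_pos _)) i
        (lt_of_le_of_lt (Nat.sub_le _ _) hi)

lemma exists_break0 (N : ℕ) : ∃ i, ¬(zeck N (2*i+1) = 1 ∧ zeck N (2*i) = 0) := by
  refine ⟨N + 1, ?_⟩
  have h : zeck N (2*(N+1)+1) = 0 := zeck_eq_zero_of_lt N _ (by omega)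
  simp [h]

lemma exists_break1 (N : ℕ) : ∃ i, ¬(zeck N (2*i+2) = 1 ∧ zeck N (2*i+1) = 0) := by
  refine ⟨N + 1, ?_⟩
  have h : zeck N (2*(N+1)+2) = 0 := zeck_eq_zero_of_lt N _ (by omega)
  simp [h]

/-- The number `s` of `10`-blocks carried in the stochastic Fibonacci adding machine:
if the digits of `N` end with `00(10)^s` (case `ε₀ = 0`) or with `00(10)^s1`
(case `ε₀ = 1`), this returns `s`. -/
def carryLen (N : ℕ) : ℕ :=
  if zeck N 0 = 0 then Nat.find (exists_break0 N) else Nat.find (exists_break1 N)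

/-- `Pprod p t = p 1 * p 2 * ⋯ * p t`. -/
def Pprod (p : ℕ → ℝ) (t : ℕ) : ℝ := ∏ i ∈ Finset.Icc 1 t, p i

/-- The transition matrix `S` of the Fibonacci stochastic adding machine associated to
the probability sequence `p`:  `S N N = 1 - p 1`;  if the digits of `N` end with
`00(10)^s` then `S N (N+1) = p 1 ⋯ p (s+1)` and `S N (N+1-F (2m)) = p 1 ⋯ p m * (1 - p (m+1))`
for `1 ≤ m ≤ s`;  if the digits of `N` end with `00(10)^s1` then
`S N (N+1) = p 1 ⋯ p (s+2)` and `S N (N+1-F (2m-1)) = p 1 ⋯ p m * (1 - p (m+1))` for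
`1 ≤ m ≤ s+1`;  all other entries vanish. -/
noncomputable def Smat (p : ℕ → ℝ) (N M : ℕ) : ℝ :=
  (if M = N then 1 - p 1 else 0) +
  if zeck N 0 = 0 then
    (if M = N + 1 then Pprod p (carryLen N + 1) else 0) +
    ∑ m ∈ Finset.Icc 1 (carryLen N),
      (if M = N + 1 - fibF (2*m) then Pprod p m * (1 - p (m+1)) else 0)
  else
    (if M = N + 1 then Pprod p (carryLen N + 2) else 0) +
    ∑ m ∈ Finset.Icc 1 (carryLen N + 1),
      (if M = N + 1 - fibF (2*m - 1) then Pprod p m * (1 - p (m+1)) else 0)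

-- infrastructure lemmas
lemma fibF_strictMono : StrictMono fibF := by
  apply strictMono_nat_of_lt_succ
  intro n
  match n with
  | 0 => simp [fibF]
  | (k+1) =>
    have := fibF_pos k
    show fibF (k+1) < fibF (k+1) + fibF k
    omega

lemma lt_fibF (n : ℕ) : n < fibF n := by
  induction n with
  | zero => simp [fibF]
  | succ k ih =>
    have := fibF_strictMono (show k < k + 1 by omega)
    omega

lemma findGreatest_fib {N n : ℕ} (h1 : fibF n ≤ N) (h2 : N < fibF (n+1)) :
    Nat.findGreatest (fun j => fibF j ≤ N) N = n := by
  rw [Nat.findGreatest_eq_iff]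
  have hnN : n ≤ N := le_trans (le_of_lt (lt_fibF n)) h1
  refine ⟨hnN, fun _ => h1, fun k hk _ hP => ?_⟩
  have : fibF (n+1) ≤ fibF k := fibF_strictMono.monotone hk
  omega

lemma zeck_step {N n : ℕ} (h1 : fibF n ≤ N) (h2 : N < fibF (n+1)) (i : ℕ) :
    zeck N i = if i = n then 1 else zeck (N - fibF n) i := by
  have hN : N ≠ 0 := by have := fibF_pos n; omega
  rw [zeck, dif_neg hN, findGreatest_fib h1 h2]

lemma zeck_zero : ∀ i, zeck 0 i = 0 := by
  intro i; rw [zeck]; simp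

lemma zeck_zero_of_lt_fib : ∀ N k, N < fibF k → ∀ j, k ≤ j → zeck N j = 0 := by
  intro N
  induction N using Nat.strong_induction_on with
  | _ N ih =>
    intro k hNk j hkj
    rcases Nat.eq_zero_or_pos N with rfl | hN
    · exact zeck_zero j
    · set g := Nat.findGreatest (fun j => fibF j ≤ N) N with hg
      have hgle : fibF g ≤ N := Nat.findGreatest_spec (P := fun j => fibF j ≤ N)
        (Nat.zero_le N) (by simp only [fibF]; omega)
      have hglt : g < k := by
        by_contra h
        push_neg at h
        exact absurd (le_trans (fibF_strictMono.monotone h) hgle) (by omega)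
      rw [zeck, dif_neg (by omega), if_neg (by omega)]
      exact ih _ (Nat.sub_lt hN (fibF_pos _)) k (by omega) j hkj

lemma zeck_sum_le : ∀ N, ∀ T : Finset ℕ, (∀ t ∈ T, zeck N t = 1) → ∑ t ∈ T, fibF t ≤ N := by
  intro N
  induction N using Nat.strong_induction_on with
  | _ N ih =>
    intro T hT
    rcases Nat.eq_zero_or_pos N with rfl | hN
    · have : T = ∅ := by
        apply Finset.eq_empty_of_forall_notMem
        intro t ht
        have := hT t ht
        rw [zeck_zero] at this
        omega
      simp [this]
    · set g := Nat.findGreatest (fun j => fibF j ≤ N) N with hg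
      have hgle : fibF g ≤ N := Nat.findGreatest_spec (P := fun j => fibF j ≤ N)
        (Nat.zero_le N) (by simp only [fibF]; omega)
      have hT' : ∀ t ∈ T.erase g, zeck (N - fibF g) t = 1 := by
        intro t ht
        have htg := Finset.ne_of_mem_erase ht
        have := hT t (Finset.mem_of_mem_erase ht)
        rwa [zeck, dif_neg (by omega), if_neg htg] at this
      have hrec := ih _ (Nat.sub_lt hN (fibF_pos g)) _ hT'
      by_cases hgT : g ∈ T
      · rw [← Finset.insert_erase hgT, Finset.sum_insert (Finset.notMem_erase g T)]
        omega
      · rw [Finset.erase_eq_of_notMem hgT] at hrec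
        omega

lemma zeck_one_le {N k : ℕ} (h : zeck N k = 1) : fibF k ≤ N := by
  have := zeck_sum_le N {k} (by simpa using h)
  simpa using this

lemma sum_fib_odd (m : ℕ) : ∑ t ∈ Finset.range m, fibF (2*t+1) = fibF (2*m) - 1 := by
  induction m with
  | zero => simp [fibF]
  | succ k ih =>
    rw [Finset.sum_range_succ, ih]
    have h1 : fibF (2*(k+1)) = fibF (2*k+1) + fibF (2*k) := by
      have : 2*(k+1) = (2*k)+2 := by ring
      rw [this]; rfl
    have h2 : 2*k+1 = 2*(k+1)-1 := by omega
    have := fibF_pos (2*k)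
    omega

lemma sum_fib_even (m : ℕ) : ∑ t ∈ Finset.range (m+1), fibF (2*t) = fibF (2*m+1) - 1 := by
  induction m with
  | zero => simp [fibF]
  | succ k ih =>
    rw [Finset.sum_range_succ, ih, show 2*(k+1) = 2*k+2 by ring]
    have h1 : fibF (2*k+2+1) = fibF (2*k+2) + fibF (2*k+1) := rfl
    have := fibF_pos (2*k+1)
    omega
lemma zeck_le_one : ∀ N i, zeck N i ≤ 1 := by
  intro N
  induction N using Nat.strong_induction_on with
  | _ N ih =>
    intro i
    rw [zeck]
    split
    · omega
    · split
      · omega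
      · rename_i h _
        exact ih _ (Nat.sub_lt (Nat.pos_of_ne_zero h) (fibF_pos _)) i
/-- Let `i, j, n` be positive integers with `F n ≤ i, j ≤ F (n+1) - 1`.
Then the transition probability from `i` to `j` equals the transition probability from
`i - F n` to `j - F n`, i.e. `S i j = S (i - F n) (j - F n)`. -/
theorem stmt1 (p : ℕ → ℝ) (hp : ∀ i, 1 ≤ i → 0 < p i ∧ p i ≤ 1)
    (i j n : ℕ) (hipos : 0 < i) (hjpos : 0 < j) (hnpos : 0 < n)
    (hi1 : fibF n ≤ i) (hi2 : i ≤ fibF (n+1) - 1)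
    (hj1 : fibF n ≤ j) (hj2 : j ≤ fibF (n+1) - 1) :
    Smat p i j = Smat p (i - fibF n) (j - fibF n) := by
  clear hp
  obtain ⟨ν, rfl⟩ : ∃ ν, n = ν + 1 := ⟨n - 1, by omega⟩
  have hνfe : fibF (ν+2) = fibF (ν+1) + fibF ν := rfl
  have hfpos2 := fibF_pos (ν+2)
  have hee : fibF (ν+1+1) = fibF (ν+2) := rfl
  have hfpos1 := fibF_pos (ν+1)
  have hfpos0 := fibF_pos ν
  have hi2' : i < fibF (ν+2) := by omega
  have hj2' : j < fibF (ν+2) := by omega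
  obtain ⟨a, ha⟩ : ∃ a, i = a + fibF (ν+1) := ⟨i - fibF (ν+1), by omega⟩
  obtain ⟨b, hb⟩ : ∃ b, j = b + fibF (ν+1) := ⟨j - fibF (ν+1), by omega⟩
  have hia' : i - fibF (ν+1) = a := by omega
  have hjb' : j - fibF (ν+1) = b := by omega
  rw [hia', hjb']
  have halt : a < fibF ν := by omega
  have hblt : b < fibF ν := by omega
  have zi : ∀ k, zeck i k = if k = ν+1 then 1 else zeck a k := by
    intro k
    rw [zeck_step hi1 hi2' k, hia']
  have za0 : ∀ k, ν ≤ k → zeck a k = 0 := fun k hk => zeck_zero_of_lt_fib a ν halt k hk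
  have z00 : zeck i 0 = zeck a 0 := by rw [zi 0, if_neg (by omega)]
  by_cases h0 : zeck a 0 = 0
  · -- even branch
    have h0i : zeck i 0 = 0 := by rw [z00]; exact h0
    have hbrk := Nat.find_spec (exists_break0 a)
    have hblock : ∀ t, t < Nat.find (exists_break0 a) →
        zeck a (2*t+1) = 1 ∧ zeck a (2*t) = 0 :=
      fun t ht => not_not.mp (Nat.find_min (exists_break0 a) ht)
    have hcl_a : carryLen a = Nat.find (exists_break0 a) := by
      unfold carryLen; rw [if_pos h0]
    set s := Nat.find (exists_break0 a) with hsdef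
    have h2s : 2*s < ν + 1 := by
      rcases Nat.eq_zero_or_pos s with hs | hs
      · omega
      · have h1 := (hblock (s-1) (by omega)).1
        by_contra hc
        push_neg at hc
        rw [za0 (2*(s-1)+1) (by omega)] at h1
        omega
    have hamt : ∀ m', m' ≤ s → fibF (2*m') ≤ a + 1 := by
      intro m' hm'
      have hsum := zeck_sum_le a ((Finset.range m').image (fun t => 2*t+1)) ?_
      · rw [Finset.sum_image (by intro x _ y _ h; simp only at h; omega), sum_fib_odd] at hsum
        have := fibF_pos (2*m')
        omega
      · intro t ht
        simp only [Finset.mem_image, Finset.mem_range] at ht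
        obtain ⟨u, hu, rfl⟩ := ht
        exact (hblock u (by omega)).1
    by_cases hbd : ν + 1 = 2*s+1
    · -- boundary case
      have ha1 : a + 1 = fibF ν := by
        have h1 := hamt s le_rfl
        rw [show 2*s = ν by omega] at h1
        omega
      have hitop : i + 1 = fibF (ν+2) := by omega
      have hcl_i : carryLen i = s + 1 := by
        unfold carryLen
        rw [if_pos h0i, Nat.find_eq_iff]
        refine ⟨?_, ?_⟩
        · have hz : zeck i (2*(s+1)+1) = 0 := by
            rw [zi, if_neg (by omega)]
            exact za0 _ (by omega)
          simp [hz]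
        · intro t ht
          rw [not_not]
          rcases Nat.lt_or_ge t s with h | h
          · rw [zi, zi, if_neg (by omega), if_neg (by omega)]
            exact hblock t h
          · have hts : t = s := by omega
            subst hts
            refine ⟨?_, ?_⟩
            · rw [zi, if_pos (by omega)]
            · rw [zi, if_neg (by omega)]
              exact za0 _ (by omega)
      simp only [Smat]
      rw [if_pos h0i, if_pos h0, hcl_i, hcl_a]
      rw [Finset.sum_Icc_succ_top (show (1:ℕ) ≤ s+1 by omega)]
      have hz1 : (if j = i + 1 then Pprod p (s+1+1) else 0) = 0 := if_neg (by omega)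
      have hz2 : (if b = a + 1 then Pprod p (s+1) else 0) = 0 := if_neg (by omega)
      have hz3 : (if j = i + 1 - fibF (2*(s+1)) then Pprod p (s+1) * (1 - p (s+1+1)) else 0)
          = 0 := by
        apply if_neg
        have h4 : fibF (2*(s+1)) = fibF (ν+2) := by rw [show 2*(s+1) = ν+2 by omega]
        omega
      rw [hz1, hz2, hz3]
      simp only [add_zero, zero_add]
      congr 1
      · split_ifs <;> first | rfl | (exfalso; omega)
      · refine Finset.sum_congr rfl fun m' hm' => ?_
        rw [Finset.mem_Icc] at hm'
        have hF := hamt m' hm'.2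
        split_ifs <;> first | rfl | (exfalso; omega)
    · -- generic case
      have hcl_i : carryLen i = s := by
        unfold carryLen
        rw [if_pos h0i, Nat.find_eq_iff]
        refine ⟨?_, ?_⟩
        · rw [zi, zi, if_neg (by omega), if_neg (by omega)]
          exact hbrk
        · intro t ht
          rw [not_not, zi, zi, if_neg (by omega), if_neg (by omega)]
          exact hblock t ht
      simp only [Smat]
      rw [if_pos h0i, if_pos h0, hcl_i, hcl_a]
      congr 1
      · split_ifs <;> first | rfl | (exfalso; omega)
      congr 1
      · split_ifs <;> first | rfl | (exfalso; omega)
      · refine Finset.sum_congr rfl fun m' hm' => ?_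
        rw [Finset.mem_Icc] at hm'
        have hF := hamt m' hm'.2
        split_ifs <;> first | rfl | (exfalso; omega)
  · -- odd branch
    have h0i : ¬ zeck i 0 = 0 := by rw [z00]; exact h0
    have h0' : zeck a 0 = 1 := by have := zeck_le_one a 0; omega
    have hν1 : 1 ≤ ν := by
      by_contra h
      have hν0 : ν = 0 := by omega
      have h1 : fibF ν = 1 := by rw [hν0]; rfl
      have ha0 : a = 0 := by omega
      rw [ha0, zeck_zero 0] at h0'
      omega
    have hbrk := Nat.find_spec (exists_break1 a)
    have hblock : ∀ t, t < Nat.find (exists_break1 a) →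
        zeck a (2*t+2) = 1 ∧ zeck a (2*t+1) = 0 :=
      fun t ht => not_not.mp (Nat.find_min (exists_break1 a) ht)
    have hcl_a : carryLen a = Nat.find (exists_break1 a) := by
      unfold carryLen; rw [if_neg h0]
    set s := Nat.find (exists_break1 a) with hsdef
    have h2s : 2*s + 2 ≤ ν + 1 := by
      rcases Nat.eq_zero_or_pos s with hs | hs
      · omega
      · have h1 := (hblock (s-1) (by omega)).1
        by_contra hc
        push_neg at hc
        rw [za0 (2*(s-1)+2) (by omega)] at h1
        omega
    have hamt : ∀ m', 1 ≤ m' → m' ≤ s + 1 → fibF (2*m'-1) ≤ a + 1 := by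
      intro m' h1 h2
      obtain ⟨u, rfl⟩ : ∃ u, m' = u + 1 := ⟨m'-1, by omega⟩
      have hsum := zeck_sum_le a ((Finset.range (u+1)).image (fun t => 2*t)) ?_
      · rw [Finset.sum_image (by intro x _ y _ h; simp only at h; omega), sum_fib_even] at hsum
        have := fibF_pos (2*u+1)
        rw [show 2*(u+1)-1 = 2*u+1 by omega]
        omega
      · intro t ht
        simp only [Finset.mem_image, Finset.mem_range] at ht
        obtain ⟨v, hv, rfl⟩ := ht
        rcases Nat.eq_zero_or_pos v with hv0 | hvpos
        · rw [hv0]; simpa using h0'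
        · have hbl := (hblock (v-1) (by omega)).1
          rwa [show 2*(v-1)+2 = 2*v by omega] at hbl
    by_cases hbd : ν + 1 = 2*s+2
    · -- boundary case
      have ha1 : a + 1 = fibF ν := by
        have h1 := hamt (s+1) (by omega) le_rfl
        rw [show 2*(s+1)-1 = ν by omega] at h1
        omega
      have hitop : i + 1 = fibF (ν+2) := by omega
      have hcl_i : carryLen i = s + 1 := by
        unfold carryLen
        rw [if_neg h0i, Nat.find_eq_iff]
        refine ⟨?_, ?_⟩
        · have hz : zeck i (2*(s+1)+2) = 0 := by
            rw [zi, if_neg (by omega)]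
            exact za0 _ (by omega)
          simp [hz]
        · intro t ht
          rw [not_not]
          rcases Nat.lt_or_ge t s with h | h
          · rw [zi, zi, if_neg (by omega), if_neg (by omega)]
            exact hblock t h
          · have hts : t = s := by omega
            subst hts
            refine ⟨?_, ?_⟩
            · rw [zi, if_pos (by omega)]
            · rw [zi, if_neg (by omega)]
              exact za0 _ (by omega)
      simp only [Smat]
      rw [if_neg h0i, if_neg h0, hcl_i, hcl_a]
      rw [Finset.sum_Icc_succ_top (show (1:ℕ) ≤ s+1+1 by omega)]
      have hz1 : (if j = i + 1 then Pprod p (s+1+2) else 0) = 0 := if_neg (by omega)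
      have hz2 : (if b = a + 1 then Pprod p (s+2) else 0) = 0 := if_neg (by omega)
      have hz3 : (if j = i + 1 - fibF (2*(s+1+1)-1) then
          Pprod p (s+1+1) * (1 - p (s+1+1+1)) else 0) = 0 := by
        apply if_neg
        have h4 : fibF (2*(s+1+1)-1) = fibF (ν+2) := by rw [show 2*(s+1+1)-1 = ν+2 by omega]
        omega
      rw [hz1, hz2, hz3]
      simp only [add_zero, zero_add]
      congr 1
      · split_ifs <;> first | rfl | (exfalso; omega)
      · refine Finset.sum_congr rfl fun m' hm' => ?_
        rw [Finset.mem_Icc] at hm'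
        have hF := hamt m' hm'.1 hm'.2
        split_ifs <;> first | rfl | (exfalso; omega)
    · -- generic case
      have hcl_i : carryLen i = s := by
        unfold carryLen
        rw [if_neg h0i, Nat.find_eq_iff]
        refine ⟨?_, ?_⟩
        · rw [zi, zi, if_neg (by omega), if_neg (by omega)]
          exact hbrk
        · intro t ht
          rw [not_not, zi, zi, if_neg (by omega), if_neg (by omega)]
          exact hblock t ht
      simp only [Smat]
      rw [if_neg h0i, if_neg h0, hcl_i, hcl_a]
      congr 1
      · split_ifs <;> first | rfl | (exfalso; omega)
      congr 1
      · split_ifs <;> first | rfl | (exfalso; omega)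
      · refine Finset.sum_congr rfl fun m' hm' => ?_
        rw [Finset.mem_Icc] at hm'
        have hF := hamt m' hm'.1 hm'.2
        split_ifs <;> first | rfl | (exfalso; omega)
end
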